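/- Fix a decreasing sequence ε_k > 0 and define for smooth f on a compact manifold N the norm ‖f‖_ε² = Σ_{k≥0} ε_k⟨∇^k f, ∇^k f⟩_{L²}. Then for every K > 0 the set V(K) = {f smooth : ‖f‖_ε < K} is relatively compact in the C^∞ topology, i.e. every sequence (f_n) with ‖f_n‖_ε < K has a subsequence converging in C^∞. -/

import Mathlib

open MeasureTheory

open intervalIntegral Set Filter

lemma aux_periodic_deriv (f : ℝ → ℝ) (h : Function.Periodic f 1) :
    Function.Periodic (deriv f) 1 := by
  intro x
  have : (fun y => f (y + 1)) = f := funext fun y => h y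
  calc deriv f (x + 1) = deriv (fun y => f (y + 1)) x := (deriv_comp_add_const f 1 x).symm
    _ = deriv f x := by rw [this]

lemma aux_periodic_iter (f : ℝ → ℝ) (h : Function.Periodic f 1) (k : ℕ) :
    Function.Periodic (iteratedDeriv k f) 1 := by
  induction k with
  | zero => simpa [iteratedDeriv_zero] using h
  | succ k ih => rw [iteratedDeriv_succ]; exact aux_periodic_deriv _ ih

lemma aux_contdiff_iter (f : ℝ → ℝ) (h : ContDiff ℝ (⊤ : ℕ∞) f) (k : ℕ) :
    ContDiff ℝ (⊤ : ℕ∞) (iteratedDeriv k f) := by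
  rw [iteratedDeriv_eq_iterate]
  exact ContDiff.iterate_deriv k h

lemma aux_exists_sq_le (h : ℝ → ℝ) (hc : Continuous h) (a : ℝ)
    (ha : (∫ t in (0:ℝ)..1, (h t)^2) ≤ a) :
    ∃ s ∈ Set.Icc (0:ℝ) 1, (h s)^2 ≤ a := by
  by_contra hcon
  push_neg at hcon
  obtain ⟨s₀, hs₀, hmin⟩ := isCompact_Icc.exists_isMinOn (⟨0, by norm_num⟩ :
      (Set.Icc (0:ℝ) 1).Nonempty) ((hc.pow 2).continuousOn (s := Set.Icc 0 1))
  have h1 : (h s₀)^2 ≤ ∫ t in (0:ℝ)..1, (h t)^2 := by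
    have : ((h s₀)^2 : ℝ) = ∫ _t in (0:ℝ)..1, (h s₀)^2 := by simp
    rw [this]
    exact integral_mono_on (by norm_num) (intervalIntegrable_const)
      ((hc.pow 2).intervalIntegrable 0 1) (fun x hx => hmin hx)
  exact absurd (h1.trans ha) (not_le.2 (hcon s₀ hs₀))

-- λ-form oscillation bound
lemma aux_osc_lam (h : ℝ → ℝ) (hd : Differentiable ℝ h) (hc : Continuous (deriv h))
    (hp : Function.Periodic (deriv h) 1) (b : ℝ)
    (hint : (∫ t in (0:ℝ)..1, (deriv h t)^2) ≤ b)
    {s t : ℝ} (hst : s ≤ t) (hts : t ≤ s + 1) (lam : ℝ) (hlam : 0 < lam) :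
    |h t - h s| ≤ b/(2*lam) + lam*(t-s)/2 := by
  have hc2 : Continuous fun x => (deriv h x)^2 := hc.pow 2
  have hp2 : Function.Periodic (fun x => (deriv h x)^2) 1 := fun x => by simp [hp x]
  have hper : (∫ x in s..s+1, (deriv h x)^2) = ∫ x in (0:ℝ)..1, (deriv h x)^2 := by
    simpa using hp2.intervalIntegral_add_eq s 0
  have hsplit : (∫ x in s..t, (deriv h x)^2) ≤ ∫ x in s..s+1, (deriv h x)^2 := by
    rw [← integral_add_adjacent_intervals (hc2.intervalIntegrable s t)
      (hc2.intervalIntegrable t (s+1))]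
    have : (0:ℝ) ≤ ∫ x in t..s+1, (deriv h x)^2 :=
      integral_nonneg hts (fun u _ => sq_nonneg _)
    linarith
  have hIb : (∫ x in s..t, (deriv h x)^2) ≤ b := hsplit.trans (hper ▸ hint)
  have hftc : (∫ x in s..t, deriv h x) = h t - h s :=
    integral_deriv_eq_sub (fun x _ => hd x) (hc.intervalIntegrable s t)
  have habs : |h t - h s| ≤ ∫ x in s..t, |deriv h x| := by
    rw [← hftc]; exact abs_integral_le_integral_abs hst
  have hpt : ∀ x, |deriv h x| ≤ (deriv h x)^2/(2*lam) + lam/2 := by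
    intro x
    have h2 : 2*lam*|deriv h x| ≤ (deriv h x)^2 + lam^2 := by
      nlinarith [sq_nonneg (|deriv h x| - lam), sq_abs (deriv h x)]
    rw [show (deriv h x)^2/(2*lam) + lam/2 = ((deriv h x)^2 + lam^2)/(2*lam) by
      field_simp]
    rw [le_div_iff₀ (by positivity)]
    nlinarith
  have hmono : (∫ x in s..t, |deriv h x|) ≤
      ∫ x in s..t, ((deriv h x)^2/(2*lam) + lam/2) :=
    integral_mono_on hst (hc.abs.intervalIntegrable s t)
      (((hc2.div_const _).add continuous_const).intervalIntegrable s t)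
      (fun x _ => hpt x)
  have hcalc : (∫ x in s..t, ((deriv h x)^2/(2*lam) + lam/2)) =
      (∫ x in s..t, (deriv h x)^2)/(2*lam) + (t-s)*(lam/2) := by
    rw [integral_add ((hc2.div_const _).intervalIntegrable s t)
      (intervalIntegrable_const), intervalIntegral.integral_div, intervalIntegral.integral_const, smul_eq_mul]
  have hfin : (∫ x in s..t, (deriv h x)^2)/(2*lam) ≤ b/(2*lam) :=
    div_le_div_of_nonneg_right ?_ ?_ |>.trans_eq rfl
  · calc |h t - h s| ≤ _ := habs
      _ ≤ _ := hmono
      _ = _ := hcalc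
      _ ≤ b/(2*lam) + lam*(t-s)/2 := by
        have := hfin
        nlinarith
  · exact hIb
  · positivity

lemma aux_osc_sqrt (h : ℝ → ℝ) (hd : Differentiable ℝ h) (hc : Continuous (deriv h))
    (hp : Function.Periodic (deriv h) 1) (b : ℝ) (hb : 0 ≤ b)
    (hint : (∫ t in (0:ℝ)..1, (deriv h t)^2) ≤ b) :
    ∀ s t : ℝ, |t - s| ≤ 1 → |h t - h s| ≤ Real.sqrt ((b+1) * |t - s|) := by
  have main : ∀ s t : ℝ, s ≤ t → t - s ≤ 1 → |h t - h s| ≤ Real.sqrt ((b+1) * (t - s)) := by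
    intro s t hst hts
    rcases eq_or_lt_of_le hst with rfl | hlt
    · simp [Real.sqrt_nonneg]
    · set d := t - s with hd_def
      have hdpos : 0 < d := by simp [hd_def]; linarith
      set r := Real.sqrt ((b+1)*d) with hr_def
      have hrpos : 0 < r := Real.sqrt_pos.2 (by positivity)
      have hr2 : r^2 = (b+1)*d := Real.sq_sqrt (by positivity)
      have key := aux_osc_lam h hd hc hp b hint hst (by linarith) (r/d) (by positivity)
      refine key.trans ?_
      have h1 : b/(2*(r/d)) = b*d/(2*r) := by
        field_simp
      have h2 : (r/d)*(t-s)/2 = r/2 := by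
        rw [← hd_def]; field_simp
      rw [h1, h2]
      have h3 : b*d ≤ r^2 := by rw [hr2]; nlinarith
      have h4 : b*d/(2*r) ≤ r^2/(2*r) := by gcongr
      have h5 : r^2/(2*r) = r/2 := by rw [sq]; field_simp
      linarith
  intro s t habs
  rcases le_total s t with hst | hts
  · rw [abs_of_nonneg (by linarith : (0:ℝ) ≤ t - s)] at habs ⊢
    exact main s t hst habs
  · rw [abs_of_nonpos (by linarith : t - s ≤ 0)] at habs ⊢
    rw [abs_sub_comm]
    have := main t s hts (by linarith)
    simpa [neg_sub] using this

open BoundedContinuousFunction in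
/-- Floer's `ε`-norm `‖f‖_ε² = Σ_k ε_k ‖∇^k f‖²_{L²}` on smooth
functions on a compact manifold (modeled here by 1-periodic smooth functions on
`ℝ`): for every `K > 0`, the ball `V(K) = {f : ‖f‖_ε < K}` is relatively compact in
the `C^∞` topology — every sequence in it has a subsequence converging in `C^∞`
(all derivatives uniformly). -/
theorem stmt_13 (ε : ℕ → ℝ) (hε : ∀ k, 0 < ε k) (hdec : ∀ k, ε (k + 1) ≤ ε k)
    (K : ℝ) (hK : 0 < K)
    (f : ℕ → ℝ → ℝ)
    (hsmooth : ∀ n, ContDiff ℝ (⊤ : ℕ∞) (f n))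
    (hper : ∀ n, Function.Periodic (f n) 1)
    (hbound : ∀ n,
      (∑' k : ℕ, ENNReal.ofReal
          (ε k * ∫ t in (0:ℝ)..1, (iteratedDeriv k (f n) t) ^ 2))
        < ENNReal.ofReal (K ^ 2)) :
    ∃ (φ : ℕ → ℕ) (g : ℝ → ℝ), StrictMono φ ∧ ContDiff ℝ (⊤ : ℕ∞) g ∧
      Function.Periodic g 1 ∧
      ∀ k : ℕ, TendstoUniformly (fun n => iteratedDeriv k (f (φ n)))
        (iteratedDeriv k g) Filter.atTop := by
  set B : ℕ → ℝ := fun k => K^2 / ε k with hB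
  have hBpos : ∀ k, 0 < B k := fun k => div_pos (by positivity) (hε k)
  have hck : ∀ k n, ContDiff ℝ (⊤:ℕ∞) (iteratedDeriv k (f n)) :=
    fun k n => aux_contdiff_iter _ (hsmooth n) k
  have hcont : ∀ k n, Continuous (iteratedDeriv k (f n)) := fun k n => (hck k n).continuous
  have hdiff : ∀ k n, Differentiable ℝ (iteratedDeriv k (f n)) :=
    fun k n => (hck k n).differentiable (by simp)
  have hperk : ∀ k n, Function.Periodic (iteratedDeriv k (f n)) 1 :=
    fun k n => aux_periodic_iter _ (hper n) k
  have hderiv_eq : ∀ k n, deriv (iteratedDeriv k (f n)) = iteratedDeriv (k+1) (f n) :=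
    fun k n => (iteratedDeriv_succ).symm
  -- L² bounds
  have hL2 : ∀ k n, (∫ t in (0:ℝ)..1, (iteratedDeriv k (f n) t)^2) ≤ B k := by
    intro k n
    have h1 : ENNReal.ofReal (ε k * ∫ t in (0:ℝ)..1, (iteratedDeriv k (f n) t)^2)
        < ENNReal.ofReal (K^2) := lt_of_le_of_lt (ENNReal.le_tsum k) (hbound n)
    have h2 : ε k * (∫ t in (0:ℝ)..1, (iteratedDeriv k (f n) t)^2) < K^2 := by
      by_contra hcon
      push_neg at hcon
      exact absurd h1 (not_lt.2 (ENNReal.ofReal_le_ofReal hcon))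
    have h3 : (∫ t in (0:ℝ)..1, (iteratedDeriv k (f n) t)^2)
        = (ε k * ∫ t in (0:ℝ)..1, (iteratedDeriv k (f n) t)^2) / ε k :=
      (mul_div_cancel_left₀ _ (hε k).ne').symm
    have h4 : (ε k * ∫ t in (0:ℝ)..1, (iteratedDeriv k (f n) t)^2) / ε k ≤ K^2 / ε k := by
      gcongr
      all_goals first | exact h2.le | exact (hε k).le | positivity
    rw [h3]
    exact h4
  -- oscillation modulus
  have hosc : ∀ k n (s t : ℝ), |t - s| ≤ 1 →
      |iteratedDeriv k (f n) t - iteratedDeriv k (f n) s|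
        ≤ Real.sqrt ((B (k+1) + 1) * |t - s|) := by
    intro k n
    apply aux_osc_sqrt (iteratedDeriv k (f n)) (hdiff k n)
    · rw [hderiv_eq k n]; exact hcont (k+1) n
    · rw [hderiv_eq k n]; exact hperk (k+1) n
    · exact (hBpos (k+1)).le
    · rw [hderiv_eq k n]; exact hL2 (k+1) n
  -- sup bound
  set M : ℕ → ℝ := fun k => Real.sqrt (B k) + Real.sqrt (B (k+1) + 1) with hM
  have hsup : ∀ k n (t : ℝ), t ∈ Set.Icc (0:ℝ) 1 → |iteratedDeriv k (f n) t| ≤ M k := by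
    intro k n t ht
    obtain ⟨s₀, hs₀, hs₀le⟩ := aux_exists_sq_le _ (hcont k n) (B k) (hL2 k n)
    have h1 : |iteratedDeriv k (f n) s₀| ≤ Real.sqrt (B k) := by
      rw [← Real.sqrt_sq_eq_abs]; exact Real.sqrt_le_sqrt hs₀le
    have hdist : |t - s₀| ≤ 1 := by
      rw [abs_le]
      constructor <;> [linarith [ht.1, ht.2, hs₀.1, hs₀.2]; linarith [ht.1, ht.2, hs₀.1, hs₀.2]]
    have h2 := hosc k n s₀ t hdist
    have h3 : Real.sqrt ((B (k+1) + 1) * |t - s₀|) ≤ Real.sqrt (B (k+1) + 1) := by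
      apply Real.sqrt_le_sqrt
      nlinarith [abs_nonneg (t - s₀), (hBpos (k+1)).le]
    calc |iteratedDeriv k (f n) t|
        = |iteratedDeriv k (f n) s₀ + (iteratedDeriv k (f n) t - iteratedDeriv k (f n) s₀)| := by
          ring_nf
      _ ≤ |iteratedDeriv k (f n) s₀| + |iteratedDeriv k (f n) t - iteratedDeriv k (f n) s₀| :=
          abs_add_le _ _
      _ ≤ M k := by rw [hM]; exact add_le_add h1 (h2.trans h3)
  -- the Arzelà–Ascoli setup
  let F : ℕ → ∀ _k : ℕ, (Set.Icc (0:ℝ) 1 →ᵇ ℝ) := fun n k =>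
    BoundedContinuousFunction.mkOfCompact
      (ContinuousMap.mk (fun x : Set.Icc (0:ℝ) 1 => iteratedDeriv k (f n) ↑x)
        ((hcont k n).comp continuous_subtype_val))
  let A : ℕ → Set (Set.Icc (0:ℝ) 1 →ᵇ ℝ) := fun k => Set.range (fun n => F n k)
  have hAcomp : ∀ k, IsCompact (closure (A k)) := by
    intro k
    apply BoundedContinuousFunction.arzela_ascoli (Set.Icc (-(M k)) (M k)) isCompact_Icc
    · rintro g x ⟨n, rfl⟩
      have := hsup k n x x.2
      rw [Set.mem_Icc]
      exact abs_le.1 this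
    · apply Metric.equicontinuous_of_continuity_modulus
        (fun d => Real.sqrt ((B (k+1) + 1) * |d|))
      · have hcm : Continuous fun d : ℝ => Real.sqrt ((B (k+1)+1) * |d|) :=
          Real.continuous_sqrt.comp (continuous_const.mul continuous_abs)
        have := hcm.tendsto 0
        simpa using this
      · intro x y i
        obtain ⟨n, hn⟩ := i.2
        have hxy : |(x:ℝ) - (y:ℝ)| ≤ 1 := by
          rw [abs_le]
          constructor <;> [linarith [x.2.1, x.2.2, y.2.1, y.2.2];
            linarith [x.2.1, x.2.2, y.2.1, y.2.2]]
        have := hosc k n y x hxy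
        rw [← hn]
        have hdxy : dist x y = |(x:ℝ) - (y:ℝ)| := by
          rw [Subtype.dist_eq, Real.dist_eq]
        rw [hdxy, abs_abs]
        calc dist (F n k x) (F n k y)
            = |iteratedDeriv k (f n) ↑x - iteratedDeriv k (f n) ↑y| := Real.dist_eq _ _
          _ ≤ Real.sqrt ((B (k+1) + 1) * |(x:ℝ) - (y:ℝ)|) := this
  set S : Set (∀ _k : ℕ, Set.Icc (0:ℝ) 1 →ᵇ ℝ) := Set.univ.pi (fun k => closure (A k)) with hS
  have hScomp : IsCompact S := isCompact_univ_pi hAcomp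
  have hFS : ∀ n, F n ∈ S := fun n => Set.mem_univ_pi.2 (fun k => subset_closure ⟨n, rfl⟩)
  obtain ⟨G, hGS, φ, hφ, hconv⟩ := hScomp.isSeqCompact hFS
  have hcomp : ∀ k, Filter.Tendsto (fun n => F (φ n) k) Filter.atTop (nhds (G k)) :=
    fun k => (tendsto_pi_nhds.1 hconv) k
  have hmem : ∀ t : ℝ, Int.fract t ∈ Set.Icc (0:ℝ) 1 :=
    fun t => ⟨Int.fract_nonneg t, (Int.fract_lt_one t).le⟩
  let gk : ℕ → ℝ → ℝ := fun k t => G k ⟨Int.fract t, hmem t⟩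
  have hval : ∀ k n (t : ℝ), iteratedDeriv k (f n) t = F n k ⟨Int.fract t, hmem t⟩ := by
    intro k n t
    show iteratedDeriv k (f n) t = iteratedDeriv k (f n) (Int.fract t)
    have h := (hperk k n).sub_int_mul_eq (x := t) (n := ⌊t⌋)
    rw [mul_one, Int.self_sub_floor] at h
    exact h.symm
  have hUnif : ∀ k, TendstoUniformly (fun n => iteratedDeriv k (f (φ n))) (gk k) Filter.atTop := by
    intro k
    rw [Metric.tendstoUniformly_iff]
    intro δ hδ
    obtain ⟨N, hN⟩ := Metric.tendsto_atTop.1 (hcomp k) δ hδ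
    filter_upwards [Filter.eventually_ge_atTop N] with n hn t
    have h1 : iteratedDeriv k (f (φ n)) t = F (φ n) k ⟨Int.fract t, hmem t⟩ := hval k (φ n) t
    have h2 : gk k t = G k ⟨Int.fract t, hmem t⟩ := rfl
    rw [h1, h2, dist_comm]
    exact lt_of_le_of_lt (BoundedContinuousFunction.dist_coe_le_dist _) (hN n hn)
  have hHasDeriv : ∀ k (t : ℝ), HasDerivAt (gk k) (gk (k+1) t) t := by
    intro k
    apply hasDerivAt_of_tendstoUniformly
      (f := fun n => iteratedDeriv k (f (φ n)))
      (f' := fun n => iteratedDeriv (k+1) (f (φ n))) (hUnif (k+1))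
    · filter_upwards with n
      intro x
      have h := ((hdiff k (φ n)) x).hasDerivAt
      rwa [hderiv_eq k (φ n)] at h
    · intro x
      exact (hUnif k).tendsto_at x
  have hgkeq : ∀ k, iteratedDeriv k (gk 0) = gk k := by
    intro k
    induction k with
    | zero => exact iteratedDeriv_zero
    | succ k ih =>
      rw [iteratedDeriv_succ, ih]
      funext t
      exact (hHasDeriv k t).deriv
  refine ⟨φ, gk 0, hφ, ?_, ?_, ?_⟩
  · apply contDiff_of_differentiable_iteratedDeriv
    intro m _
    rw [hgkeq m]
    exact fun t => (hHasDeriv m t).differentiableAt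
  · intro t
    show G 0 ⟨Int.fract (t+1), hmem (t+1)⟩ = G 0 ⟨Int.fract t, hmem t⟩
    congr 1
    exact Subtype.ext (Int.fract_add_one t)
  · intro k
    rw [hgkeq k]
    exact hUnif k
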